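/- Efficiency of Extended Shapley: with φ_A(v) = ∑_{S ⊆ N} (|S|!·(n−|S|)!/(n+1)!)·(v_A(S) − v_B(S)) and φ_i(v) = ∑_{S ⊆ N \ {i}} [w_{S,N}·τ_{S,N}·(v_A(S ∪ {i}) − v_A(S)) + (1 − w_{S,N})·τ_{S,N}·(v_B(S ∪ {i}) − v_B(S))], one has φ_A(v) + ∑_{i ∈ N} φ_i(v) = v_A(N), provided v_A(∅) = v_B(∅) = 0. -/

import Mathlib

open Finset

lemma insert_reindex {α : Type*} [DecidableEq α] (N : Finset α) (F : Finset α → ℝ) :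
    ∑ S ∈ N.powerset, ∑ i ∈ N \ S, F (insert i S)
      = ∑ T ∈ N.powerset, (T.card : ℝ) * F T := by
  have h2 : ∑ T ∈ N.powerset, (T.card : ℝ) * F T = ∑ T ∈ N.powerset, ∑ _i ∈ T, F T := by
    refine Finset.sum_congr rfl fun T _ => ?_
    rw [Finset.sum_const, nsmul_eq_mul]
  rw [h2, Finset.sum_sigma' N.powerset (fun S => N \ S) (fun S i => F (insert i S)),
    Finset.sum_sigma' N.powerset (fun T => (T : Finset α)) (fun T _ => F T)]
  refine Finset.sum_nbij' (fun p => ⟨insert p.2 p.1, p.2⟩) (fun p => ⟨p.1.erase p.2, p.2⟩)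
    ?_ ?_ ?_ ?_ ?_
  · rintro ⟨S, i⟩ hp
    simp only [Finset.mem_sigma, Finset.mem_powerset, Finset.mem_sdiff] at hp ⊢
    exact ⟨Finset.insert_subset (hp.2.1) hp.1, Finset.mem_insert_self _ _⟩
  · rintro ⟨T, i⟩ hp
    simp only [Finset.mem_sigma, Finset.mem_powerset, Finset.mem_sdiff] at hp ⊢
    exact ⟨(Finset.erase_subset _ _).trans hp.1, hp.1 hp.2, Finset.notMem_erase _ _⟩
  · rintro ⟨S, i⟩ hp
    simp only [Finset.mem_sigma, Finset.mem_powerset, Finset.mem_sdiff] at hp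
    simp [Finset.erase_insert hp.2.2]
  · rintro ⟨T, i⟩ hp
    simp only [Finset.mem_sigma, Finset.mem_powerset] at hp
    simp [Finset.insert_erase hp.2]
  · rintro ⟨S, i⟩ _; rfl

/-- Efficiency of Extended Shapley. -/
theorem extended_shapley_efficiency {α : Type*} [DecidableEq α]
    (N : Finset α) (vA vB : Finset α → ℝ) (hA0 : vA ∅ = 0) (hB0 : vB ∅ = 0) :
    (∑ S ∈ N.powerset,
        (S.card.factorial * (N.card - S.card).factorial : ℝ) / ((N.card + 1).factorial : ℝ)
          * (vA S - vB S))
    + ∑ i ∈ N, ∑ S ∈ (N.erase i).powerset,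
        ((((S.card : ℝ) + 1) / ((N.card : ℝ) + 1))
            * ((S.card.factorial * (N.card - S.card - 1).factorial : ℝ) / (N.card.factorial : ℝ))
            * (vA (insert i S) - vA S)
          + (1 - ((S.card : ℝ) + 1) / ((N.card : ℝ) + 1))
            * ((S.card.factorial * (N.card - S.card - 1).factorial : ℝ) / (N.card.factorial : ℝ))
            * (vB (insert i S) - vB S))
    = vA N := by
  classical
  set n := N.card with hn
  set cA : ℕ → ℝ := fun s =>
    (((s : ℝ) + 1) / ((n : ℝ) + 1))
      * ((s.factorial * (n - s - 1).factorial : ℝ) / (n.factorial : ℝ)) with hcA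
  set cB : ℕ → ℝ := fun s =>
    (1 - ((s : ℝ) + 1) / ((n : ℝ) + 1))
      * ((s.factorial * (n - s - 1).factorial : ℝ) / (n.factorial : ℝ)) with hcB
  set a : ℕ → ℝ := fun s =>
    (s.factorial * (n - s).factorial : ℝ) / ((n + 1).factorial : ℝ) with ha
  set F : Finset α → ℝ := fun T => cA (T.card - 1) * vA T + cB (T.card - 1) * vB T with hF
  set G : Finset α → ℝ := fun S => cA S.card * vA S + cB S.card * vB S with hG
  have hswap :
      (∑ i ∈ N, ∑ S ∈ (N.erase i).powerset,
        (cA S.card * (vA (insert i S) - vA S) + cB S.card * (vB (insert i S) - vB S)))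
      = ∑ S ∈ N.powerset, ∑ i ∈ N \ S,
        (cA S.card * (vA (insert i S) - vA S) + cB S.card * (vB (insert i S) - vB S)) := by
    refine Finset.sum_comm' fun i S => ?_
    simp only [Finset.mem_powerset, Finset.mem_sdiff, Finset.subset_erase]
    tauto
  have hinner : ∀ S ∈ N.powerset, ∀ i ∈ N \ S,
      (cA S.card * (vA (insert i S) - vA S) + cB S.card * (vB (insert i S) - vB S))
        = F (insert i S) - G S := by
    intro S hS i hi
    simp only [Finset.mem_sdiff] at hi
    have hcard : (insert i S).card = S.card + 1 := Finset.card_insert_of_notMem hi.2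
    simp only [hF, hG, hcard, Nat.add_sub_cancel]
    ring
  have key : (∑ i ∈ N, ∑ S ∈ (N.erase i).powerset,
        (cA S.card * (vA (insert i S) - vA S) + cB S.card * (vB (insert i S) - vB S)))
      = ∑ T ∈ N.powerset, ((T.card : ℝ) * F T - ((n : ℝ) - T.card) * G T) := by
    rw [hswap]
    rw [Finset.sum_congr rfl (fun S hS => Finset.sum_congr rfl (hinner S hS))]
    have : ∀ S ∈ N.powerset, ∑ i ∈ N \ S, (F (insert i S) - G S)
        = (∑ i ∈ N \ S, F (insert i S)) - ((n : ℝ) - S.card) * G S := by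
      intro S hS
      rw [Finset.sum_sub_distrib, Finset.sum_const, nsmul_eq_mul,
        Finset.card_sdiff_of_subset (Finset.mem_powerset.mp hS)]
      have : ((n - S.card : ℕ) : ℝ) = (n : ℝ) - S.card := by
        have := Finset.card_le_card (Finset.mem_powerset.mp hS)
        push_cast [Nat.cast_sub (show S.card ≤ n from this)]; ring
      rw [this]
    rw [Finset.sum_congr rfl this, Finset.sum_sub_distrib, insert_reindex N F,
      ← Finset.sum_sub_distrib]
  rw [key]
  rw [← Finset.sum_add_distrib]
  have hNmem : N ∈ N.powerset := Finset.mem_powerset_self N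
  rw [Finset.sum_eq_single_of_mem N hNmem]
  · -- term at N equals vA N
    have hsub : n - n = 0 := Nat.sub_self n
    rcases Nat.eq_zero_or_pos n with h0 | hpos
    · have hNe : N = ∅ := Finset.card_eq_zero.mp h0
      subst hNe
      simp [ha, hF, hG, hA0, hB0, h0]
    · obtain ⟨m, hm⟩ := Nat.exists_eq_add_of_lt hpos
      -- n = 0 + m + 1 = m + 1
      have hnm : n = m + 1 := by omega
      have hcN : N.card = n := rfl
      have e1 : n - n = 0 := by omega
      have e2 : n - 1 = m := by omega
      have e3 : n - m - 1 = 0 := by omega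
      have e4 : (n : ℝ) - (n : ℝ) = 0 := by ring
      simp only [hF, hG, hcA, hcB, hcN, e1, e2, e3, e4, Nat.factorial_zero]
      clear key hswap hinner hF hG hcA hcB ha
      clear_value cA cB a F G
      clear cA cB a F G
      have hfn : ((n + 1).factorial : ℝ) = ((n : ℝ) + 1) * n.factorial := by
        push_cast [Nat.factorial_succ]; ring
      have hfm : (n.factorial : ℝ) = (n : ℝ) * m.factorial := by
        rw [hnm]; push_cast [Nat.factorial_succ]; ring
      have hnf : (n.factorial : ℝ) ≠ 0 := by positivity
      have hn1 : ((n : ℝ) + 1) ≠ 0 := Nat.cast_add_one_ne_zero n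
      have hmf : (m.factorial : ℝ) ≠ 0 := by positivity
      have hmn : (m : ℝ) = (n : ℝ) - 1 := by rw [hnm]; push_cast; ring
      rw [hfn, hmn]
      field_simp
      rw [hfm, hnm]
      push_cast
      ring
  · -- other terms vanish
    intro T hT hTne
    have hTsub : T ⊆ N := Finset.mem_powerset.mp hT
    have hTlt : T.card < n := by
      have hle : T.card ≤ n := Finset.card_le_card hTsub
      rcases lt_or_eq_of_le hle with h | h
      · exact h
      · exact absurd (Finset.eq_of_subset_of_card_le hTsub (le_of_eq h.symm)) hTne
    rcases Finset.eq_empty_or_nonempty T with rfl | hTne'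
    · simp only [hF, hG, Finset.card_empty, hA0, hB0]
      ring
    · have hT1 : 1 ≤ T.card := Finset.card_pos.mpr hTne'
      obtain ⟨m, hm⟩ : ∃ m, T.card = m + 1 := ⟨T.card - 1, by omega⟩
      obtain ⟨j, hj⟩ : ∃ j, n = T.card + j + 1 := ⟨n - T.card - 1, by omega⟩
      set t := T.card with htc
      have e1 : n - t = j + 1 := by omega
      have e2 : t - 1 = m := by omega
      have e3 : n - m - 1 = j + 1 := by omega
      have e4 : n - t - 1 = j := by omega
      simp only [hF, hG, hcA, hcB, ← htc, e1, e2, e3, e4]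
      clear key hswap hinner hT hF hG hcA hcB ha
      clear_value cA cB a F G
      clear cA cB a F G
      have hfn : ((n + 1).factorial : ℝ) = ((n : ℝ) + 1) * n.factorial := by
        push_cast [Nat.factorial_succ]; ring
      have hft : (t.factorial : ℝ) = (t : ℝ) * m.factorial := by
        rw [hm]; push_cast [Nat.factorial_succ, hm]; ring
      have hfj : ((j + 1).factorial : ℝ) = ((j : ℝ) + 1) * j.factorial := by
        push_cast [Nat.factorial_succ]; ring
      have hnf : (n.factorial : ℝ) ≠ 0 := by positivity
      have hn1 : ((n : ℝ) + 1) ≠ 0 := Nat.cast_add_one_ne_zero n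
      have hmR : (m : ℝ) = (t : ℝ) - 1 := by rw [hm]; push_cast; ring
      have hjR : (j : ℝ) = (n : ℝ) - t - 1 := by
        have : (n : ℝ) = (t : ℝ) + j + 1 := by rw [hj]; push_cast; ring
        linarith
      rw [hfn, hft, hfj, hmR, hjR]
      have hmf : (m.factorial : ℝ) ≠ 0 := by positivity
      have hjf : (j.factorial : ℝ) ≠ 0 := by positivity
      simp only [Nat.add_sub_cancel]
      field_simp
      ring
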